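/- For every natural number k ≥ 1 and real ρ > 0, in the cooperative game on N = {g, u_1, ..., u_n} with ν(S) = 0 if g ∉ S and ν(S) = ρ·|S \ {g}|^k otherwise, the founder's Shapley value φ_g(ν) = (ρ/(n+1)) ∑_{s=0}^{n} s^k satisfies lim_{n→∞} φ_g(ν)/ν(N) = 1/(k+1), and the total crowd share satisfies lim_{n→∞} (∑_{i=1}^n φ_{u_i}(ν))/ν(N) = k/(k+1). -/

import Mathlib

open Finset Filter Topology

/-- The Shapley value of player `i` in the cooperative game with player set `N`
and value function `ν`. -/
noncomputable def shapley {α : Type*} [DecidableEq α] (N : Finset α) (ν : Finset α → ℝ)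
    (i : α) : ℝ :=
  ∑ S ∈ (N.erase i).powerset,
    (((S.card.factorial : ℝ) * ((N.card - S.card - 1).factorial : ℝ)) / (N.card.factorial : ℝ)) *
      (ν (insert i S) - ν S)

lemma coeff_eq (n j : ℕ) (hj : j ≤ n) :
    ((n.choose j : ℝ)) * ((j.factorial : ℝ) * (((n + 1) - j - 1).factorial : ℝ) / ((n + 1).factorial : ℝ))
      = 1 / (n + 1 : ℝ) := by
  have h1 : (n + 1) - j - 1 = n - j := by omega
  rw [h1]
  have h2 : (n.choose j : ℝ) * (j.factorial : ℝ) * ((n - j).factorial : ℝ) = (n.factorial : ℝ) := by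
    rw [← Nat.cast_mul, ← Nat.cast_mul, Nat.choose_mul_factorial_mul_factorial hj]
  have h3 : ((n + 1).factorial : ℝ) = ((n : ℝ) + 1) * (n.factorial : ℝ) := by
    rw [Nat.factorial_succ]; push_cast; ring
  have hf : (n.factorial : ℝ) ≠ 0 := Nat.cast_ne_zero.2 n.factorial_ne_zero
  have hn1 : (n : ℝ) + 1 ≠ 0 := by positivity
  rw [h3]
  field_simp
  exact h2

lemma phi_g (k : ℕ) (ρ : ℝ) (ν : ∀ n : ℕ, Finset (Option (Fin n)) → ℝ)
    (hν : ∀ n S, ν n S = if none ∈ S then ρ * ((S.erase none).card : ℝ) ^ k else 0)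
    (n : ℕ) : shapley Finset.univ (ν n) none =
      (ρ / (n + 1 : ℝ)) * ∑ s ∈ Finset.range (n + 1), (s : ℝ) ^ k := by
  have hcard : (Finset.univ : Finset (Option (Fin n))).card = n + 1 := by simp
  have hE : ((Finset.univ : Finset (Option (Fin n))).erase none).card = n := by simp
  unfold shapley
  rw [hcard]
  have hterm : ∀ S ∈ ((Finset.univ : Finset (Option (Fin n))).erase none).powerset,
      (((S.card.factorial : ℝ) * (((n+1) - S.card - 1).factorial : ℝ)) / (((n+1)).factorial : ℝ)) *
        (ν n (insert none S) - ν n S)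
      = (((S.card.factorial : ℝ) * (((n+1) - S.card - 1).factorial : ℝ)) / (((n+1)).factorial : ℝ)) *
        (ρ * (S.card : ℝ) ^ k) := by
    intro S hS
    have hnS : none ∉ S := fun h => (mem_erase.1 (mem_powerset.1 hS h)).1 rfl
    rw [hν, hν]
    simp [hnS, Finset.erase_insert hnS]
  rw [Finset.sum_congr rfl hterm, Finset.sum_powerset]
  rw [hE]
  have hinner : ∀ j ∈ Finset.range (n + 1),
      (∑ S ∈ Finset.powersetCard j ((Finset.univ : Finset (Option (Fin n))).erase none),
        (((S.card.factorial : ℝ) * (((n+1) - S.card - 1).factorial : ℝ)) / (((n+1)).factorial : ℝ)) *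
          (ρ * (S.card : ℝ) ^ k))
      = (ρ / (n + 1 : ℝ)) * (j : ℝ) ^ k := by
    intro j hj
    have hj' : j ≤ n := Nat.lt_succ_iff.1 (Finset.mem_range.1 hj)
    rw [Finset.sum_congr rfl (fun S hS => by
      rw [(Finset.mem_powersetCard.1 hS).2])]
    rw [Finset.sum_const, Finset.card_powersetCard, hE, nsmul_eq_mul]
    have := coeff_eq n j hj'
    rw [← mul_assoc, this]
    ring
  rw [Finset.sum_congr rfl hinner, ← Finset.mul_sum]

lemma coeff_u (n t : ℕ) (hn : 1 ≤ n) (ht : t ≤ n - 1) :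
    (((n-1).choose t : ℝ)) * (((t+1).factorial : ℝ) * (((n + 1) - (t+1) - 1).factorial : ℝ) / ((n + 1).factorial : ℝ))
      = ((t : ℝ) + 1) / ((n : ℝ) * ((n : ℝ) + 1)) := by
  have h1 : (n + 1) - (t+1) - 1 = (n - 1) - t := by omega
  rw [h1]
  have h2 : (((n-1).choose t : ℝ)) * (t.factorial : ℝ) * (((n-1) - t).factorial : ℝ) = ((n-1).factorial : ℝ) := by
    rw [← Nat.cast_mul, ← Nat.cast_mul, Nat.choose_mul_factorial_mul_factorial ht]
  have h3 : ((n + 1).factorial : ℝ) = ((n : ℝ) + 1) * (n : ℝ) * ((n-1).factorial : ℝ) := by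
    have : n = (n - 1) + 1 := by omega
    rw [Nat.factorial_succ, this, Nat.factorial_succ]
    push_cast [Nat.cast_sub hn]
    ring
  have h4 : ((t+1).factorial : ℝ) = ((t : ℝ) + 1) * (t.factorial : ℝ) := by
    rw [Nat.factorial_succ]; push_cast; ring
  have hf : ((n-1).factorial : ℝ) ≠ 0 := Nat.cast_ne_zero.2 (Nat.factorial_ne_zero _)
  have hft : (t.factorial : ℝ) ≠ 0 := Nat.cast_ne_zero.2 (Nat.factorial_ne_zero _)
  have hfnt : (((n-1) - t).factorial : ℝ) ≠ 0 := Nat.cast_ne_zero.2 (Nat.factorial_ne_zero _)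
  have hn0 : (n : ℝ) ≠ 0 := by positivity
  have hn1 : (n : ℝ) + 1 ≠ 0 := by positivity
  rw [h3, h4]
  rw [mul_div_assoc']
  rw [div_eq_div_iff (by positivity) (by positivity)]
  calc (((n-1).choose t : ℝ)) * (((t:ℝ)+1) * (t.factorial : ℝ) * (((n-1) - t).factorial : ℝ)) * ((n:ℝ) * ((n:ℝ)+1))
      = ((((n-1).choose t : ℝ)) * (t.factorial : ℝ) * (((n-1) - t).factorial : ℝ)) * (((t:ℝ)+1) * ((n:ℝ) * ((n:ℝ)+1))) := by ring
    _ = ((t:ℝ) + 1) * (((n:ℝ) + 1) * (n:ℝ) * ((n-1).factorial : ℝ)) := by rw [h2]; ring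

lemma phi_u (k : ℕ) (ρ : ℝ) (ν : ∀ n : ℕ, Finset (Option (Fin n)) → ℝ)
    (hν : ∀ n S, ν n S = if none ∈ S then ρ * ((S.erase none).card : ℝ) ^ k else 0)
    (n : ℕ) (i : Fin n) : shapley Finset.univ (ν n) (some i) =
      (ρ / ((n : ℝ) * ((n : ℝ) + 1))) *
        ∑ t ∈ Finset.range n, ((t : ℝ) + 1) * (((t : ℝ) + 1) ^ k - (t : ℝ) ^ k) := by
  have hn : 1 ≤ n := i.pos
  have hcard : (Finset.univ : Finset (Option (Fin n))).card = n + 1 := by simp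
  set U : Finset (Option (Fin n)) :=
    ((Finset.univ : Finset (Option (Fin n))).erase (some i)).erase none with hU
  have hUcard : U.card = n - 1 := by simp [hU]
  have hnU : none ∉ U := notMem_erase _ _
  have hsplit : (Finset.univ : Finset (Option (Fin n))).erase (some i) = insert none U := by
    rw [hU, insert_erase]; simp
  unfold shapley
  rw [hcard, hsplit, Finset.sum_powerset_insert hnU]
  have hzero : (∑ T ∈ U.powerset,
      (((T.card.factorial : ℝ) * (((n+1) - T.card - 1).factorial : ℝ)) / (((n+1)).factorial : ℝ)) *
        (ν n (insert (some i) T) - ν n T)) = 0 := by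
    apply Finset.sum_eq_zero
    intro T hT
    have hTU : T ⊆ U := mem_powerset.1 hT
    have h1 : none ∉ T := fun h => hnU (hTU h)
    have h2 : none ∉ insert (some i) T := by simp [h1]
    rw [hν, hν, if_neg h2, if_neg h1]; ring
  rw [hzero, zero_add]
  have hterm : ∀ T ∈ U.powerset,
      ((((insert none T).card.factorial : ℝ) * (((n+1) - (insert none T).card - 1).factorial : ℝ)) / (((n+1)).factorial : ℝ)) *
        (ν n (insert (some i) (insert none T)) - ν n (insert none T))
      = ((((T.card+1).factorial : ℝ) * (((n+1) - (T.card+1) - 1).factorial : ℝ)) / (((n+1)).factorial : ℝ)) *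
        (ρ * (((T.card : ℝ) + 1) ^ k - (T.card : ℝ) ^ k)) := by
    intro T hT
    have hTU : T ⊆ U := mem_powerset.1 hT
    have h1 : none ∉ T := fun h => hnU (hTU h)
    have hiT : some i ∉ T := fun h => (mem_erase.1 (mem_erase.1 (hTU h)).2).1 rfl
    have hcins : (insert none T).card = T.card + 1 := card_insert_of_notMem h1
    have hkey : (insert (some i) (insert none T)).erase none = insert (some i) T := by
      rw [Finset.insert_comm, Finset.erase_insert (by simp [h1])]
    have hkey2 : (insert none T).erase none = T := Finset.erase_insert h1
    rw [hν, hν, if_pos (mem_insert_self _ _), if_pos (by simp), hkey, hkey2, hcins,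
      Finset.card_insert_of_notMem hiT]
    push_cast
    ring
  rw [Finset.sum_congr rfl hterm, Finset.sum_powerset, hUcard]
  have hrange : n - 1 + 1 = n := by omega
  rw [hrange]
  rw [Finset.mul_sum]
  apply Finset.sum_congr rfl
  intro t htr
  have ht : t ≤ n - 1 := by have := Finset.mem_range.1 htr; omega
  rw [Finset.sum_congr rfl (fun S hS => by rw [(Finset.mem_powersetCard.1 hS).2]),
    Finset.sum_const, Finset.card_powersetCard, hUcard, nsmul_eq_mul, ← mul_assoc,
    coeff_u n t hn ht]
  ring

lemma tele (k : ℕ) (hk : 1 ≤ k) (n : ℕ) :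
    ∑ t ∈ Finset.range n, ((t : ℝ) + 1) * (((t : ℝ) + 1) ^ k - (t : ℝ) ^ k)
      = ((n : ℝ) + 1) * (n : ℝ) ^ k - ∑ s ∈ Finset.range (n + 1), (s : ℝ) ^ k := by
  induction n with
  | zero => simp [zero_pow (by omega : k ≠ 0)]
  | succ m ih =>
    rw [Finset.sum_range_succ, ih, Finset.sum_range_succ (n := m + 1)]
    push_cast
    ring

lemma pow_bound (k : ℕ) (x : ℝ) (hx : 0 ≤ x) :
    ((k : ℝ) + 1) * x ^ k ≤ (x + 1) ^ (k + 1) - x ^ (k + 1) ∧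
    (x + 1) ^ (k + 1) - x ^ (k + 1) ≤ ((k : ℝ) + 1) * (x + 1) ^ k := by
  have hfac : (x + 1) ^ (k+1) - x ^ (k+1)
      = ∑ i ∈ Finset.range (k+1), (x+1) ^ i * x ^ (k - i) := by
    have := geom_sum₂_mul (x + 1) x (k + 1)
    simp only [add_sub_cancel_left, mul_one] at this
    rw [← this]
    apply Finset.sum_congr rfl
    intro i hi
    congr 1
  constructor
  · rw [hfac]
    calc ((k : ℝ) + 1) * x ^ k = ∑ _i ∈ Finset.range (k+1), x ^ k := by
          rw [Finset.sum_const, Finset.card_range]; push_cast; ring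
      _ ≤ _ := by
          apply Finset.sum_le_sum
          intro i hi
          have hik : i ≤ k := Nat.lt_succ_iff.1 (Finset.mem_range.1 hi)
          calc x ^ k = x ^ i * x ^ (k - i) := by rw [← pow_add]; congr 1; omega
            _ ≤ (x+1) ^ i * x ^ (k - i) := by
                apply mul_le_mul_of_nonneg_right _ (by positivity)
                exact pow_le_pow_left₀ hx (by linarith) i
  · rw [hfac]
    calc ∑ i ∈ Finset.range (k+1), (x+1) ^ i * x ^ (k - i)
        ≤ ∑ _i ∈ Finset.range (k+1), (x+1) ^ k := by
          apply Finset.sum_le_sum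
          intro i hi
          have hik : i ≤ k := Nat.lt_succ_iff.1 (Finset.mem_range.1 hi)
          calc (x+1) ^ i * x ^ (k - i) ≤ (x+1) ^ i * (x+1) ^ (k - i) := by
                apply mul_le_mul_of_nonneg_left _ (by positivity)
                exact pow_le_pow_left₀ (by linarith) (by linarith) _
            _ = (x+1) ^ k := by rw [← pow_add]; congr 1; omega
      _ = ((k : ℝ) + 1) * (x + 1) ^ k := by
          rw [Finset.sum_const, Finset.card_range]; push_cast; ring

lemma sum_pow_bounds (k n : ℕ) (hk : 1 ≤ k) :
    ((k : ℝ) + 1) * (∑ s ∈ Finset.range (n + 1), (s : ℝ) ^ k) ≤ ((n : ℝ) + 1) ^ (k + 1) ∧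
    ((n : ℝ) + 1) ^ (k + 1) ≤ ((k : ℝ) + 1) * ((∑ s ∈ Finset.range (n + 1), (s : ℝ) ^ k) + ((n : ℝ) + 1) ^ k) := by
  have htel : ∑ s ∈ Finset.range (n+1), (((s : ℝ) + 1) ^ (k+1) - (s : ℝ) ^ (k+1)) = ((n : ℝ) + 1) ^ (k+1) := by
    have := Finset.sum_range_sub (fun s : ℕ => ((s : ℝ)) ^ (k+1)) (n+1)
    push_cast at this
    simpa using this
  constructor
  · rw [Finset.mul_sum, ← htel]
    exact Finset.sum_le_sum fun s _ => (pow_bound k s (Nat.cast_nonneg s)).1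
  · rw [← htel]
    have : ((k:ℝ)+1) * ((∑ s ∈ Finset.range (n + 1), (s : ℝ) ^ k) + ((n : ℝ) + 1) ^ k)
        = ∑ s ∈ Finset.range (n+1), ((k:ℝ)+1) * ((s:ℝ)+1)^k := by
      rw [← Finset.mul_sum]
      congr 1
      have h := Finset.sum_range_succ' (fun s : ℕ => ((s:ℕ):ℝ)^k) (n+1)
      rw [Finset.sum_range_succ (fun s : ℕ => ((s:ℕ):ℝ)^k) (n+1)] at h
      push_cast at h
      rw [h, zero_pow (by omega : k ≠ 0)]
      ring
    rw [this]
    exact Finset.sum_le_sum fun s _ => (pow_bound k s (Nat.cast_nonneg s)).2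

lemma limit_main (k : ℕ) (hk : 1 ≤ k) :
    Filter.Tendsto (fun n : ℕ => (∑ s ∈ Finset.range (n + 1), (s : ℝ) ^ k) / (((n : ℝ) + 1) * (n : ℝ) ^ k))
      Filter.atTop (nhds (1 / (k + 1 : ℝ))) := by
  have hk1 : (0:ℝ) < (k:ℝ) + 1 := by positivity
  have hP : Filter.Tendsto (fun n : ℕ => (1 + 1/(n:ℝ)) ^ k) Filter.atTop (nhds 1) := by
    have h1 : Filter.Tendsto (fun n : ℕ => 1 + 1/(n:ℝ)) Filter.atTop (nhds 1) := by
      have := tendsto_one_div_atTop_nhds_zero_nat (𝕜 := ℝ)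
      have := (tendsto_const_nhds (x := (1:ℝ)) (f := Filter.atTop (α := ℕ))).add this
      simpa using this
    have := h1.pow k
    simpa using this
  have hlow : Filter.Tendsto (fun n : ℕ => (1 + 1/(n:ℝ))^k * (1/((k:ℝ)+1) - 1/((n:ℝ)+1)))
      Filter.atTop (nhds (1 / ((k:ℝ) + 1))) := by
    have h2 : Filter.Tendsto (fun n : ℕ => 1/((k:ℝ)+1) - 1/((n:ℝ)+1)) Filter.atTop (nhds (1/((k:ℝ)+1))) := by
      have := (tendsto_const_nhds (x := 1/((k:ℝ)+1)) (f := Filter.atTop (α := ℕ))).sub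
        tendsto_one_div_add_atTop_nhds_zero_nat
      simpa using this
    have := hP.mul h2
    simpa using this
  have hhigh : Filter.Tendsto (fun n : ℕ => (1 + 1/(n:ℝ))^k * (1/((k:ℝ)+1)))
      Filter.atTop (nhds (1 / ((k:ℝ) + 1))) := by
    have := hP.mul (tendsto_const_nhds (x := 1/((k:ℝ)+1)) (f := Filter.atTop (α := ℕ)))
    simpa using this
  apply tendsto_of_tendsto_of_tendsto_of_le_of_le' hlow hhigh
  · filter_upwards [Filter.eventually_atTop.2 ⟨1, fun n hn => hn⟩] with n hn
    have hn0 : (0:ℝ) < (n:ℝ) := by exact_mod_cast hn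
    have hd : (0:ℝ) < ((n:ℝ)+1) * (n:ℝ)^k := by positivity
    have hb := (sum_pow_bounds k n hk).2
    rw [le_div_iff₀ hd]
    have key : (1 + 1/(n:ℝ))^k * (1/((k:ℝ)+1) - 1/((n:ℝ)+1)) * (((n:ℝ)+1) * (n:ℝ)^k)
        = ((n:ℝ)+1)^(k+1)/((k:ℝ)+1) - ((n:ℝ)+1)^k := by
      have h1n : (1 + 1/(n:ℝ)) = ((n:ℝ)+1)/(n:ℝ) := by field_simp
      rw [h1n, div_pow]
      rw [pow_succ]
      field_simp
    rw [key, sub_le_iff_le_add, div_le_iff₀ hk1]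
    linarith
  · filter_upwards [Filter.eventually_atTop.2 ⟨1, fun n hn => hn⟩] with n hn
    have hn0 : (0:ℝ) < (n:ℝ) := by exact_mod_cast hn
    have hd : (0:ℝ) < ((n:ℝ)+1) * (n:ℝ)^k := by positivity
    have hb := (sum_pow_bounds k n hk).1
    rw [div_le_iff₀ hd]
    have key : (1 + 1/(n:ℝ))^k * (1/((k:ℝ)+1)) * (((n:ℝ)+1) * (n:ℝ)^k)
        = ((n:ℝ)+1)^(k+1)/((k:ℝ)+1) := by
      have h1n : (1 + 1/(n:ℝ)) = ((n:ℝ)+1)/(n:ℝ) := by field_simp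
      rw [h1n, div_pow, pow_succ]
      field_simp
    rw [key, le_div_iff₀ hk1]
    linarith

theorem stmt_4 (k : ℕ) (hk : 1 ≤ k) (ρ : ℝ) (hρ : 0 < ρ)
    (ν : ∀ n : ℕ, Finset (Option (Fin n)) → ℝ)
    (hν : ∀ n S, ν n S = if none ∈ S then ρ * ((S.erase none).card : ℝ) ^ k else 0) :
    (∀ n : ℕ, shapley Finset.univ (ν n) none =
      (ρ / (n + 1 : ℝ)) * ∑ s ∈ Finset.range (n + 1), (s : ℝ) ^ k) ∧
    Filter.Tendsto (fun n : ℕ => shapley Finset.univ (ν n) none / ν n Finset.univ)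
      Filter.atTop (nhds (1 / (k + 1 : ℝ))) ∧
    Filter.Tendsto
      (fun n : ℕ => (∑ i : Fin n, shapley Finset.univ (ν n) (some i)) / ν n Finset.univ)
      Filter.atTop (nhds ((k : ℝ) / (k + 1 : ℝ))) := by
  have hg := phi_g k ρ ν hν
  have hρ' : ρ ≠ 0 := ne_of_gt hρ
  have hνN : ∀ n : ℕ, ν n Finset.univ = ρ * (n : ℝ) ^ k := by
    intro n
    rw [hν]
    simp
  refine ⟨hg, ?_, ?_⟩
  · apply Filter.Tendsto.congr' ?_ (limit_main k hk)
    filter_upwards [Filter.eventually_atTop.2 ⟨1, fun n hn => hn⟩] with n hn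
    have hn0 : (0:ℝ) < (n:ℝ) := by exact_mod_cast hn
    rw [hg, hνN]
    field_simp
  · have hsum : ∀ n : ℕ, 1 ≤ n → (∑ i : Fin n, shapley Finset.univ (ν n) (some i))
        = (ρ / ((n:ℝ)+1)) * (((n:ℝ)+1)*(n:ℝ)^k - ∑ s ∈ Finset.range (n+1), (s:ℝ)^k) := by
      intro n hn
      have hn0 : (0:ℝ) < (n:ℝ) := by exact_mod_cast hn
      calc (∑ i : Fin n, shapley Finset.univ (ν n) (some i))
          = ∑ _i : Fin n, (ρ / ((n : ℝ) * ((n : ℝ) + 1))) *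
              ∑ t ∈ Finset.range n, ((t : ℝ) + 1) * (((t : ℝ) + 1) ^ k - (t : ℝ) ^ k) :=
            Finset.sum_congr rfl (fun i _ => phi_u k ρ ν hν n i)
        _ = (n : ℝ) * ((ρ / ((n : ℝ) * ((n : ℝ) + 1))) *
              ∑ t ∈ Finset.range n, ((t : ℝ) + 1) * (((t : ℝ) + 1) ^ k - (t : ℝ) ^ k)) := by
            rw [Finset.sum_const, Finset.card_univ, Fintype.card_fin, nsmul_eq_mul]
        _ = _ := by
            rw [tele k hk n]
            field_simp
    have hval : (k:ℝ)/((k:ℝ)+1) = 1 - 1/((k:ℝ)+1) := by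
      field_simp
      ring
    have h2 : Filter.Tendsto
        (fun n : ℕ => 1 - (∑ s ∈ Finset.range (n + 1), (s : ℝ) ^ k) / (((n : ℝ) + 1) * (n : ℝ) ^ k))
        Filter.atTop (nhds (1 - 1 / ((k:ℝ) + 1))) :=
      tendsto_const_nhds.sub (limit_main k hk)
    have : ((k : ℝ) + 1 : ℝ) = ((k : ℝ) + 1) := rfl
    rw [show ((k : ℝ) / (k + 1 : ℝ)) = 1 - 1/((k:ℝ)+1) from hval]
    apply Filter.Tendsto.congr' ?_ h2
    filter_upwards [Filter.eventually_atTop.2 ⟨1, fun n hn => hn⟩] with n hn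
    have hn0 : (0:ℝ) < (n:ℝ) := by exact_mod_cast hn
    have hnk : (0:ℝ) < (n:ℝ)^k := by positivity
    rw [hsum n hn, hνN]
    field_simp
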